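/- Assume q_∞ ≠ 1. Let φ = Σ_{p=1}^{n−1} c_p·[U_p] ∈ V satisfy d(φ) = 0. If 1 ≤ i ≤ n−1 and the lines H_i and H_{i+1} are not parallel, then c_i = 0. -/

import Mathlib

open scoped Classical

noncomputable section

abbrev Pt : Type := ℝ × ℝ

/-- An affine-linear functional `a*x + b*y + c` on `ℝ²` with nonzero linear part. -/
structure AffForm : Type where
  a : ℝ
  b : ℝ
  c : ℝ
  nondeg : a ≠ 0 ∨ b ≠ 0

namespace AffForm

def eval (f : AffForm) (p : Pt) : ℝ := f.a * p.1 + f.b * p.2 + f.c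

def line (f : AffForm) : Set Pt := {p | f.eval p = 0}

def Parallel (f g : AffForm) : Prop := f.a * g.b = f.b * g.a

end AffForm

variable {n : ℕ}

/-- An arrangement: at least two distinct affine lines, not all parallel. -/
def IsArrangement (α : Fin n → AffForm) : Prop :=
  2 ≤ n ∧ (∀ i j : Fin n, i ≠ j → (α i).line ≠ (α j).line) ∧
    ∃ i j : Fin n, ¬ (α i).Parallel (α j)

def complement (α : Fin n → AffForm) : Set Pt := {p | ∀ i, (α i).eval p ≠ 0}

/-- A chamber: a connected component of the complement of the union of the lines. -/
def IsChamber (α : Fin n → AffForm) (C : Set Pt) : Prop :=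
  ∃ p ∈ complement α, C = connectedComponentIn (complement α) p

/-- `Sep(C, C')`: the set of indices `i` such that `α i` is positive on one of `C, C'`
and negative on the other. -/
def SepSet (α : Fin n → AffForm) (C C' : Set Pt) : Finset (Fin n) :=
  Finset.univ.filter fun i =>
    ((∀ p ∈ C, 0 < (α i).eval p) ∧ (∀ p ∈ C', (α i).eval p < 0)) ∨
    ((∀ p ∈ C, (α i).eval p < 0) ∧ (∀ p ∈ C', 0 < (α i).eval p))

/-- `Δ(C, C') = ∏_{i ∈ Sep(C,C')} r i − ∏_{i ∈ Sep(C,C')} (r i)⁻¹`. -/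
def Delta (α : Fin n → AffForm) (r : Fin n → ℂ) (C C' : Set Pt) : ℂ :=
  (∏ i ∈ SepSet α C C', r i) - ∏ i ∈ SepSet α C C', (r i)⁻¹

/-- The open strip between two parallel lines `f.line` and `g.line`. -/
def Strip (f g : AffForm) : Set Pt :=
  {p | ∀ q ∈ g.line,
    (0 < f.eval p ∧ f.eval p < f.eval q) ∨ (f.eval q < f.eval p ∧ f.eval p < 0)}

/-- A band: the open strip between two parallel lines of the arrangement containing no
other line of the arrangement parallel to them. -/
def IsBand (α : Fin n → AffForm) (B : Set Pt) : Prop :=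
  ∃ i j : Fin n, i ≠ j ∧ (α i).Parallel (α j) ∧ B = Strip (α i) (α j) ∧
    ∀ k : Fin n, (α k).Parallel (α i) → (α k).line ∩ B = ∅

/-- The data of a band `B` bounded by the parallel lines `H i` and `H j`, together with its
two unbounded chambers `U1` (= `U_1(B)`) and `U2` (= `U_2(B)`). -/
def BandData (α : Fin n → AffForm) (i j : Fin n) (B U1 U2 : Set Pt) : Prop :=
  i ≠ j ∧ (α i).Parallel (α j) ∧ B = Strip (α i) (α j) ∧
  (∀ k : Fin n, (α k).Parallel (α i) → (α k).line ∩ B = ∅) ∧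
  IsChamber α U1 ∧ IsChamber α U2 ∧ U1 ⊆ B ∧ U2 ⊆ B ∧
  ¬ Bornology.IsBounded U1 ∧ ¬ Bornology.IsBounded U2 ∧ U1 ≠ U2

/-- Coordinates as in the paper: every intersection point of two lines has `x₂ > 0`, line
`H i` meets the `x₁`-axis exactly at `(a i, 0)` with `0 < a 1 < … < a n`, and each
`α i` is negative at the origin. -/
def GoodCoords (α : Fin n → AffForm) (a : Fin n → ℝ) : Prop :=
  (∀ i j : Fin n, i ≠ j → ∀ p : Pt, p ∈ (α i).line → p ∈ (α j).line → 0 < p.2) ∧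
  (∀ i : Fin n, (α i).line ∩ {p : Pt | p.2 = 0} = {((a i : ℝ), (0 : ℝ))}) ∧
  StrictMono a ∧ (∀ i : Fin n, 0 < a i) ∧ ∀ i : Fin n, (α i).eval (0, 0) < 0

/-- `Upos α p = ∩_{i ≤ p} {α_i > 0} ∩ ∩_{i > p} {α_i < 0}` in the 1-indexed convention of
the paper: for `1 ≤ p ≤ n-1` it is the chamber `U_p`, `Upos α 0 = U_0`, and
`Upos α n = U_0^∨`. -/
def Upos (α : Fin n → AffForm) (p : ℕ) : Set Pt :=
  {x : Pt | ∀ i : Fin n, if (i : ℕ) < p then 0 < (α i).eval x else (α i).eval x < 0}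

/-- `ch²(A)`: the chambers other than `U_0, U_1, …, U_{n-1}, U_0^∨`. -/
def ch2 (α : Fin n → AffForm) (chambers : Finset (Set Pt)) : Finset (Set Pt) :=
  chambers.filter fun C => ∀ p ≤ n, C ≠ Upos α p

/-- `d([U_p]) = −Σ_{C ∈ ch², α_p > 0, α_{p+1} < 0 on C} Δ(U_p, C)·[C]
+ Σ_{C ∈ ch², α_p < 0, α_{p+1} > 0 on C} Δ(U_p, C)·[C]`, where `i`, `j` are the indices of
the lines `H_p`, `H_{p+1}` bounding `U_p` and `U = U_p`. -/
def dChain (α : Fin n → AffForm) (chambers : Finset (Set Pt)) (r : Fin n → ℂ)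
    (i j : Fin n) (U : Set Pt) : Set Pt →₀ ℂ :=
  -(∑ C ∈ (ch2 α chambers).filter
      (fun C => (∀ x ∈ C, 0 < (α i).eval x) ∧ ∀ x ∈ C, (α j).eval x < 0),
      Finsupp.single C (Delta α r U C)) +
  ∑ C ∈ (ch2 α chambers).filter
      (fun C => (∀ x ∈ C, (α i).eval x < 0) ∧ ∀ x ∈ C, 0 < (α j).eval x),
      Finsupp.single C (Delta α r U C)

/-- slope parameter of an affine form -/
def slo (f : AffForm) : ℝ := -f.b / f.a

section Aux

lemma eval_continuous (f : AffForm) : Continuous f.eval := by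
  unfold AffForm.eval; fun_prop

/-- sign stability on a connected component of the complement -/
lemma sign_stable {n : ℕ} (α : Fin n → AffForm) {x₀ x : Pt} (h₀ : x₀ ∈ complement α)
    (hx : x ∈ connectedComponentIn (complement α) x₀) (k : Fin n) :
    ((α k).eval x₀ < 0 → (α k).eval x < 0) ∧ (0 < (α k).eval x₀ → 0 < (α k).eval x) := by
  have hsub := connectedComponentIn_subset (complement α) x₀
  have hxc : x ∈ complement α := hsub hx
  have hx0c : x₀ ∈ connectedComponentIn (complement α) x₀ := mem_connectedComponentIn h₀
  have hxne : (α k).eval x ≠ 0 := hxc k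
  have hcont : ContinuousOn (α k).eval (connectedComponentIn (complement α) x₀) :=
    (eval_continuous (α k)).continuousOn
  have hpc : IsPreconnected (connectedComponentIn (complement α) x₀) :=
    isPreconnected_connectedComponentIn
  constructor
  · intro hneg
    by_contra h
    have hpos : 0 < (α k).eval x := lt_of_le_of_ne (not_lt.1 h) (Ne.symm hxne)
    obtain ⟨y, hyC, hy0⟩ := hpc.intermediate_value hx0c hx hcont
      (Set.mem_Icc.2 ⟨le_of_lt hneg, le_of_lt hpos⟩)
    exact (hsub hyC) k hy0
  · intro hpos
    by_contra h
    have hneg : (α k).eval x < 0 := lt_of_le_of_ne (not_lt.1 h) hxne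
    obtain ⟨y, hyC, hy0⟩ := hpc.intermediate_value hx hx0c hcont
      (Set.mem_Icc.2 ⟨le_of_lt hneg, le_of_lt hpos⟩)
    exact (hsub hyC) k hy0

/-- normal form of the evaluation -/
lemma eval_normal (f : AffForm) (ha : f.a ≠ 0) (x y a0 : ℝ) (hc : f.c = -f.a * a0) :
    f.eval (x, y) = f.a * (x - slo f * y - a0) := by
  unfold AffForm.eval slo
  rw [hc]
  field_simp
  ring

end Aux

open Fin.NatCast

/-- (`n = m + 2` lines, `1`-indexed as `H_p ↔ α ↑(p-1)`.) Assume
`q_∞ ≠ 1`. Let `φ = Σ_{p=1}^{n−1} c_p·[U_p] ∈ V` satisfy `d(φ) = 0`. If `1 ≤ i ≤ n−1`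
and the lines `H_i` and `H_{i+1}` are not parallel, then `c_i = 0`. -/
theorem statement5 {m : ℕ} (α : Fin (m + 2) → AffForm) (a : Fin (m + 2) → ℝ)
    (hA : IsArrangement α) (hco : GoodCoords α a)
    (chambers : Finset (Set Pt)) (hch : ∀ C : Set Pt, C ∈ chambers ↔ IsChamber α C)
    (q r : Fin (m + 2) → ℂ) (hq : ∀ i, q i ≠ 0) (hr0 : ∀ i, r i ≠ 0)
    (hrq : ∀ i, r i ^ 2 = q i)
    (hqinf : (∏ i, q i)⁻¹ ≠ 1)
    (c : ℕ → ℂ)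
    (hker : ∑ p ∈ Finset.Icc 1 (m + 1),
      c p • dChain α chambers r ↑(p - 1) ↑p (Upos α p) = 0)
    (i : ℕ) (hi1 : 1 ≤ i) (hin : i ≤ m + 1)
    (hnp : ¬ (α ↑(i - 1)).Parallel (α ↑i)) :
    c i = 0 := by
  classical
  obtain ⟨hcross, haxis, hamono, hapos, horig⟩ := hco
  -- a-coefficient nonzero
  have haA : ∀ k : Fin (m+2), (α k).a ≠ 0 := by
    intro k h0
    have hax : ((a k : ℝ), (0:ℝ)) ∈ (α k).line ∩ {p : Pt | p.2 = 0} := by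
      rw [haxis k]; exact rfl
    have hc0 : (α k).c = 0 := by
      have h1 := hax.1
      simp only [AffForm.line, AffForm.eval, Set.mem_setOf_eq, h0] at h1
      linarith
    have hax2 : ((a k + 1 : ℝ), (0:ℝ)) ∈ (α k).line ∩ {p : Pt | p.2 = 0} := by
      constructor
      · show (α k).eval _ = 0
        simp [AffForm.eval, h0, hc0]
      · rfl
    rw [haxis k, Set.mem_singleton_iff, Prod.mk.injEq] at hax2
    linarith [hax2.1]
  -- c = -a * (a k)
  have hcval : ∀ k : Fin (m+2), (α k).c = -(α k).a * a k := by
    intro k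
    have hax : ((a k : ℝ), (0:ℝ)) ∈ (α k).line ∩ {p : Pt | p.2 = 0} := by
      rw [haxis k]; exact rfl
    have h1 := hax.1
    simp only [AffForm.line, AffForm.eval, Set.mem_setOf_eq] at h1
    linarith
  -- a-coefficient positive
  have hApos : ∀ k : Fin (m+2), 0 < (α k).a := by
    intro k
    have h1 := horig k
    simp only [AffForm.eval] at h1
    have h2 : (α k).c = -(α k).a * a k := hcval k
    have h3 : 0 < (α k).a * a k := by nlinarith
    have h4 := hapos k
    nlinarith
  -- normal form
  have hev : ∀ (k : Fin (m+2)) (x y : ℝ),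
      (α k).eval (x, y) = (α k).a * (x - slo (α k) * y - a k) :=
    fun k x y => eval_normal (α k) (haA k) x y (a k) (hcval k)
  -- parallel iff slopes equal
  have hparslo : ∀ j k : Fin (m+2), (α j).Parallel (α k) → slo (α j) = slo (α k) := by
    intro j k hp
    unfold AffForm.Parallel at hp
    unfold slo
    rw [div_eq_div_iff (haA j) (haA k)]
    nlinarith
  have hsloparn : ∀ j k : Fin (m+2), slo (α j) = slo (α k) → (α j).Parallel (α k) := by
    intro j k hs
    unfold slo at hs
    rw [div_eq_div_iff (haA j) (haA k)] at hs
    unfold AffForm.Parallel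
    nlinarith
  -- strict slope decrease for non-parallel lines
  have hstrict : ∀ j k : Fin (m+2), (j:ℕ) < (k:ℕ) → ¬ (α j).Parallel (α k) →
      slo (α k) < slo (α j) := by
    intro j k hjk hnpar
    have htne : slo (α j) ≠ slo (α k) := fun h => hnpar (hsloparn j k h)
    have hd : slo (α j) - slo (α k) ≠ 0 := sub_ne_zero.2 htne
    set ys : ℝ := (a k - a j) / (slo (α j) - slo (α k)) with hys
    set p : Pt := (a j + slo (α j) * ys, ys) with hp
    have hpj : p ∈ (α j).line := by
      show (α j).eval p = 0
      rw [hp, hev j]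
      ring
    have hpk : p ∈ (α k).line := by
      show (α k).eval p = 0
      rw [hp, hev k]
      have h2 : (slo (α j) - slo (α k)) * ys = a k - a j := by
        rw [hys]; field_simp
      rw [sub_mul] at h2
      have hz : a j + slo (α j) * ys - slo (α k) * ys - a k = 0 := by linarith
      rw [hz, mul_zero]
    have hjkne : j ≠ k := by
      intro h; rw [h] at hjk; omega
    have hy : 0 < p.2 := hcross j k hjkne p hpj hpk
    have hak : a j < a k := hamono (show j < k from hjk)
    rw [hp] at hy
    simp only at hy
    by_contra hle
    have h2 : slo (α j) - slo (α k) < 0 := by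
      rcases lt_or_eq_of_le (not_lt.1 hle) with h | h
      · linarith
      · exact absurd h htne
    have : ys < 0 := div_neg_of_pos_of_neg (by linarith) h2
    linarith
  -- weak slope decrease
  have hmono : ∀ j k : Fin (m+2), (j:ℕ) < (k:ℕ) → slo (α k) ≤ slo (α j) := by
    intro j k hjk
    by_cases hpar : (α j).Parallel (α k)
    · exact le_of_eq (hparslo j k hpar).symm
    · exact le_of_lt (hstrict j k hjk hpar)
  -- the two distinguished indices
  set I : Fin (m+2) := (↑(i-1) : Fin (m+2)) with hI
  set J : Fin (m+2) := (↑i : Fin (m+2)) with hJ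
  have hIv : (I:ℕ) = i - 1 := Fin.val_cast_of_lt (by omega)
  have hJv : (J:ℕ) = i := Fin.val_cast_of_lt (by omega)
  have hδ : 0 < slo (α I) - slo (α J) := by
    have := hstrict I J (by rw [hIv, hJv]; omega) hnp
    linarith
  set δ : ℝ := slo (α I) - slo (α J) with hδdef
  -- bound on the a's
  set M : ℝ := Finset.univ.sup' Finset.univ_nonempty (fun k => |a k|) with hMdef
  have hM : ∀ k : Fin (m+2), |a k| ≤ M := by
    intro k
    rw [hMdef]
    exact Finset.le_sup' (fun k : Fin (m+2) => |a k|) (Finset.mem_univ k)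
  have hM0 : 0 ≤ M := le_trans (abs_nonneg _) (hM I)
  set Y : ℝ := (2*M + 2)/δ with hYdef
  have hY : 0 < Y := div_pos (by linarith) hδ
  have hδY : δ * Y = 2*M + 2 := by
    rw [hYdef]; field_simp
  set ξ : ℝ := (slo (α I) + slo (α J))/2 * Y with hξdef
  set x₀ : Pt := (ξ, Y) with hx₀def
  have hξI : ξ = slo (α I) * Y - (M + 1) := by
    have h1 : slo (α I) * Y - slo (α J) * Y = 2*M + 2 := by
      rw [← sub_mul]; exact hδY
    rw [hξdef]; ring_nf; ring_nf at h1; linarith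
  have hξJ : ξ = slo (α J) * Y + (M + 1) := by
    have h1 : slo (α I) * Y - slo (α J) * Y = 2*M + 2 := by
      rw [← sub_mul]; exact hδY
    rw [hξdef]; ring_nf; ring_nf at h1; linarith
  -- the sign pattern at the base point
  have hkey : ∀ k : Fin (m+2),
      if (k:ℕ) < i then (α k).eval x₀ < 0 else 0 < (α k).eval x₀ := by
    intro k
    by_cases hk : (k:ℕ) < i
    · rw [if_pos hk]
      have hsk : slo (α I) ≤ slo (α k) := by
        rcases Nat.lt_or_ge (k:ℕ) (i-1) with h | h
        · exact hmono k I (by rw [hIv]; omega)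
        · have : k = I := Fin.ext (by rw [hIv]; omega)
          rw [this]
      have h1 : slo (α I) * Y ≤ slo (α k) * Y :=
        mul_le_mul_of_nonneg_right hsk (le_of_lt hY)
      have h2 : -M ≤ a k := neg_le_of_abs_le (hM k)
      have h3 : ξ - slo (α k) * Y - a k < 0 := by
        rw [hξI]; linarith
      rw [hx₀def, hev k]
      exact mul_neg_of_pos_of_neg (hApos k) h3
    · rw [if_neg hk]
      push_neg at hk
      have hsk : slo (α k) ≤ slo (α J) := by
        rcases Nat.lt_or_ge i (k:ℕ) with h | h
        · exact hmono J k (by rw [hJv]; omega)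
        · have : k = J := Fin.ext (by rw [hJv]; omega)
          rw [this]
      have h1 : slo (α k) * Y ≤ slo (α J) * Y :=
        mul_le_mul_of_nonneg_right hsk (le_of_lt hY)
      have h2 : a k ≤ M := le_of_abs_le (hM k)
      have h3 : 0 < ξ - slo (α k) * Y - a k := by
        rw [hξJ]; linarith
      rw [hx₀def, hev k]
      exact mul_pos (hApos k) h3
  have hx₀c : x₀ ∈ complement α := by
    intro k
    have h := hkey k
    split at h
    · exact ne_of_lt h
    · exact ne_of_gt h
  -- the chamber C
  set C : Set Pt := connectedComponentIn (complement α) x₀ with hCdef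
  have hCh : IsChamber α C := ⟨x₀, hx₀c, hCdef⟩
  have hCmem : C ∈ chambers := (hch C).2 hCh
  have hx₀C : x₀ ∈ C := mem_connectedComponentIn hx₀c
  have hnegC : ∀ k : Fin (m+2), (k:ℕ) < i → ∀ x ∈ C, (α k).eval x < 0 := by
    intro k hk x hx
    refine (sign_stable α hx₀c hx k).1 ?_
    have h := hkey k
    rwa [if_pos hk] at h
  have hposC : ∀ k : Fin (m+2), i ≤ (k:ℕ) → ∀ x ∈ C, 0 < (α k).eval x := by
    intro k hk x hx
    refine (sign_stable α hx₀c hx k).2 ?_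
    have h := hkey k
    rwa [if_neg (not_lt.2 hk)] at h
  -- C belongs to ch²
  have hC2 : C ∈ ch2 α chambers := by
    rw [ch2, Finset.mem_filter]
    refine ⟨hCmem, fun p hp hCeq => ?_⟩
    have hx₀U : x₀ ∈ Upos α p := hCeq ▸ hx₀C
    rcases Nat.eq_zero_or_pos p with h0 | h1
    · have h := hx₀U ⟨m+1, by omega⟩
      rw [h0, if_neg (by omega)] at h
      have h2 := hposC ⟨m+1, by omega⟩ (by simp; omega) x₀ hx₀C
      linarith
    · have h := hx₀U ⟨0, by omega⟩
      rw [if_pos (by simpa using h1)] at h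
      have h2 := hnegC ⟨0, by omega⟩ (by simp; omega) x₀ hx₀C
      linarith
  -- the separating set is everything
  have hSep : SepSet α (Upos α i) C = Finset.univ := by
    apply Finset.eq_univ_iff_forall.2
    intro k
    rw [SepSet, Finset.mem_filter]
    refine ⟨Finset.mem_univ _, ?_⟩
    by_cases hk : (k:ℕ) < i
    · left
      refine ⟨fun x hx => ?_, fun x hx => hnegC k hk x hx⟩
      have h := hx k
      rwa [if_pos hk] at h
    · right
      refine ⟨fun x hx => ?_, fun x hx => hposC k (not_lt.1 hk) x hx⟩
      have h := hx k
      rwa [if_neg hk] at h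
  -- Delta is nonzero
  have hR0 : (∏ k, r k) ≠ 0 := Finset.prod_ne_zero_iff.2 fun k _ => hr0 k
  have hΔval : Delta α r (Upos α i) C = (∏ k, r k) - (∏ k, r k)⁻¹ := by
    rw [Delta, hSep, Finset.prod_inv_distrib]
  have hΔne : Delta α r (Upos α i) C ≠ 0 := by
    rw [hΔval]
    intro h
    have h2 : (∏ k, r k) = (∏ k, r k)⁻¹ := sub_eq_zero.1 h
    have hq1 : (∏ k, q k) = 1 := by
      have : (∏ k, q k) = (∏ k, r k) * (∏ k, r k) := by
        rw [← Finset.prod_mul_distrib]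
        exact Finset.prod_congr rfl fun k _ => by rw [← hrq k]; ring
      rw [this]
      nth_rewrite 2 [h2]
      exact mul_inv_cancel₀ hR0
    exact hqinf (by rw [hq1]; simp)
  -- filter membership facts
  have hmemF2 : C ∈ (ch2 α chambers).filter
      (fun C' => (∀ x ∈ C', (α (↑(i-1) : Fin (m+2))).eval x < 0) ∧
        ∀ x ∈ C', 0 < (α (↑i : Fin (m+2))).eval x) := by
    rw [Finset.mem_filter]
    exact ⟨hC2, fun x hx => hnegC I (by rw [hIv]; omega) x hx,
      fun x hx => hposC J (by rw [hJv]) x hx⟩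
  -- evaluate the kernel relation at C
  have h0 := DFunLike.congr_fun hker C
  simp only [Finsupp.finset_sum_apply, Finsupp.smul_apply, dChain, Finsupp.add_apply,
    Finsupp.neg_apply, Finsupp.single_apply, Finset.sum_ite_eq', Finsupp.zero_apply,
    smul_eq_mul] at h0
  rw [Finset.sum_eq_single_of_mem i (Finset.mem_Icc.2 ⟨hi1, hin⟩)] at h0
  · rw [if_neg, if_pos hmemF2] at h0
    · have : c i * Delta α r (Upos α i) C = 0 := by
        rw [← h0]; ring
      rcases mul_eq_zero.1 this with h | h
      · exact h
      · exact absurd h hΔne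
    · intro hmem
      rw [Finset.mem_filter] at hmem
      obtain ⟨-, h1, h2⟩ := hmem
      have := h1 x₀ hx₀C
      have h3 := hnegC I (by rw [hIv]; omega) x₀ hx₀C
      linarith
  · intro p hp hpne
    rw [Finset.mem_Icc] at hp
    have hv1 : ((↑(p-1) : Fin (m+2)):ℕ) = p - 1 := Fin.val_cast_of_lt (by omega)
    have hv2 : ((↑p : Fin (m+2)):ℕ) = p := Fin.val_cast_of_lt (by omega)
    have hF1 : ¬ (C ∈ (ch2 α chambers).filter
        (fun C' => (∀ x ∈ C', 0 < (α (↑(p-1) : Fin (m+2))).eval x) ∧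
          ∀ x ∈ C', (α (↑p : Fin (m+2))).eval x < 0)) := by
      intro hmem
      rw [Finset.mem_filter] at hmem
      obtain ⟨-, h1, h2⟩ := hmem
      rcases le_or_gt p i with h | h
      · have ha1 := hnegC (↑(p-1)) (by rw [hv1]; omega) x₀ hx₀C
        have ha2 := h1 x₀ hx₀C
        linarith
      · have ha1 := hposC (↑p) (by rw [hv2]; omega) x₀ hx₀C
        have ha2 := h2 x₀ hx₀C
        linarith
    have hF2 : ¬ (C ∈ (ch2 α chambers).filter
        (fun C' => (∀ x ∈ C', (α (↑(p-1) : Fin (m+2))).eval x < 0) ∧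
          ∀ x ∈ C', 0 < (α (↑p : Fin (m+2))).eval x)) := by
      intro hmem
      rw [Finset.mem_filter] at hmem
      obtain ⟨-, h1, h2⟩ := hmem
      rcases le_or_gt p i with h | h
      · have hpi : p < i := lt_of_le_of_ne h hpne
        have ha1 := hnegC (↑p) (by rw [hv2]; omega) x₀ hx₀C
        have ha2 := h2 x₀ hx₀C
        linarith
      · have ha1 := hposC (↑(p-1)) (by rw [hv1]; omega) x₀ hx₀C
        have ha2 := h1 x₀ hx₀C
        linarith
    rw [if_neg hF1, if_neg hF2]
    ring

end
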